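/- For the partition function p, the inequality p(a)·p(b) > p(a+b) holds for all integers 1 < a ≤ b except that equality p(a)p(b) = p(a+b) holds exactly for (a,b) ∈ {(2,6), (2,7), (3,4)} and the reverse inequality p(a)p(b) < p(a+b) holds exactly for (a,b) ∈ {(2,2), (2,3), (2,4), (2,5), (3,3), (3,5)}. -/

import Mathlib

open Finset Multiset

/-- The unrestricted partition function. -/
def partitionFunction (n : ℕ) : ℕ := Fintype.card n.Partition

/-- Number of partitions of `n` all of whose parts are `≥ k`. -/
def pk (k n : ℕ) : ℕ :=
  (Finset.univ.filter (fun P : n.Partition => ∀ i ∈ P.parts, k ≤ i)).card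

/-- Number of partitions of `m` with exactly `r` parts. -/
def pparts (r m : ℕ) : ℕ :=
  (Finset.univ.filter (fun P : m.Partition => Multiset.card P.parts = r)).card

/-- Number of partitions of `m` with exactly `r` parts, all parts `≥ k`. -/
def pkr (k r m : ℕ) : ℕ :=
  (Finset.univ.filter (fun P : m.Partition =>
    (∀ i ∈ P.parts, k ≤ i) ∧ Multiset.card P.parts = r)).card

lemma card_le_sum {s : Multiset ℕ} (h : ∀ i ∈ s, 1 ≤ i) : Multiset.card s ≤ s.sum := by
  have := Multiset.card_nsmul_le_sum h
  simpa using this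

lemma sum_ge_card_mul {s : Multiset ℕ} {k : ℕ} (h : ∀ i ∈ s, k ≤ i) :
    Multiset.card s * k ≤ s.sum := by
  simpa [nsmul_eq_mul] using Multiset.card_nsmul_le_sum h

lemma pk_one (n : ℕ) : pk 1 n = partitionFunction n := by
  rw [pk, partitionFunction, Finset.filter_true_of_mem, Finset.card_univ]
  intro P _ i hi
  exact P.parts_pos hi

lemma pk_zero_right (k : ℕ) : pk k 0 = 1 := by
  rw [pk, Finset.card_eq_one]
  refine ⟨⟨0, by simp, by simp⟩, ?_⟩
  ext P
  simp only [Finset.mem_filter, Finset.mem_univ, true_and, Finset.mem_singleton]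
  constructor
  · intro _
    have : P.parts = 0 := by
      by_contra h
      obtain ⟨i, hi⟩ := Multiset.exists_mem_of_ne_zero h
      have h1 := P.parts_pos hi
      have h2 := P.parts_sum
      have : i ≤ P.parts.sum := Multiset.le_sum_of_mem hi
      omega
    ext
    simp [this]
  · rintro rfl
    simp


lemma pk_eq_zero {k n : ℕ} (h0 : 0 < n) (hnk : n < k) : pk k n = 0 := by
  rw [pk, Finset.card_eq_zero, Finset.filter_eq_empty_iff]
  intro P _
  intro hall
  have hne : P.parts ≠ 0 := by
    intro h
    have := P.parts_sum
    rw [h] at this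
    simp at this
    omega
  obtain ⟨i, hi⟩ := Multiset.exists_mem_of_ne_zero hne
  have h1 : k ≤ i := hall i hi
  have h2 : i ≤ P.parts.sum := Multiset.le_sum_of_mem hi
  rw [P.parts_sum] at h2
  omega

lemma pk_window {k n : ℕ} (h1 : k ≤ n) (h2 : n < 2 * k) (h0 : 0 < k) : pk k n = 1 := by
  rw [pk, Finset.card_eq_one]
  refine ⟨⟨{n}, by rintro i hi; simp at hi; omega, by simp⟩, ?_⟩
  ext P
  simp only [Finset.mem_filter, Finset.mem_univ, true_and, Finset.mem_singleton]
  constructor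
  · intro hall
    have hcard : Multiset.card P.parts = 1 := by
      have hne : P.parts ≠ 0 := by
        intro h
        have := P.parts_sum
        rw [h] at this
        simp at this
        omega
      have hge : 1 ≤ Multiset.card P.parts := by
        rwa [Nat.one_le_iff_ne_zero, Ne, Multiset.card_eq_zero]
      have hsum := sum_ge_card_mul hall
      rw [P.parts_sum] at hsum
      by_contra hne1
      have : 2 ≤ Multiset.card P.parts := by omega
      nlinarith
    obtain ⟨a, ha⟩ := Multiset.card_eq_one.1 hcard
    have := P.parts_sum
    rw [ha] at this
    simp at this
    ext
    rw [ha, this]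
  · rintro rfl
    intro i hi
    simp at hi
    omega


lemma pk_rec {k n : ℕ} (hk : 1 ≤ k) (hkn : k ≤ n) :
    pk k n = pk k (n - k) + pk (k + 1) n := by
  rw [pk, ← Finset.card_filter_add_card_filter_not
    (p := fun P : n.Partition => k ∈ P.parts), Finset.filter_filter, Finset.filter_filter]
  congr 1
  · -- partitions containing a part k  ↔  partitions of n - k with parts ≥ k
    rw [pk]
    apply Finset.card_bij (fun (P : n.Partition)
        (hP : P ∈ Finset.univ.filter (fun P : n.Partition => (∀ i ∈ P.parts, k ≤ i) ∧ k ∈ P.parts)) =>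
      (⟨P.parts.erase k, fun {i} hi => P.parts_pos (Multiset.mem_of_mem_erase hi), by
        have hmem : k ∈ P.parts := ((Finset.mem_filter.1 hP).2).2
        have h2 := Multiset.sum_erase hmem
        rw [P.parts_sum] at h2
        omega⟩ : (n - k).Partition))
    · intro P hP
      simp only [Finset.mem_filter, Finset.mem_univ, true_and] at hP ⊢
      intro i hi
      exact hP.1 i (Multiset.mem_of_mem_erase hi)
    · intro P hP Q hQ h
      simp only [Finset.mem_filter, Finset.mem_univ, true_and] at hP hQ
      have h' : P.parts.erase k = Q.parts.erase k := congrArg Nat.Partition.parts h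
      ext1
      rw [← Multiset.cons_erase hP.2, ← Multiset.cons_erase hQ.2, h']
    · intro Q hQ
      simp only [Finset.mem_filter, Finset.mem_univ, true_and] at hQ
      refine ⟨⟨k ::ₘ Q.parts, ?_, ?_⟩, ?_, ?_⟩
      · intro i hi
        rcases Multiset.mem_cons.1 hi with rfl | h
        · omega
        · exact Q.parts_pos h
      · rw [Multiset.sum_cons, Q.parts_sum]; omega
      · simp only [Finset.mem_filter, Finset.mem_univ, true_and]
        refine ⟨?_, Multiset.mem_cons_self k _⟩
        intro i hi
        rcases Multiset.mem_cons.1 hi with rfl | h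
        · exact le_refl _
        · exact hQ i h
      · ext1
        simp [Multiset.erase_cons_head]
  · -- no part equal to k  ↔  all parts ≥ k+1
    rw [pk]
    congr 1
    apply Finset.filter_congr
    intro P _
    constructor
    · rintro ⟨hall, hnk'⟩ i hi
      have := hall i hi
      rcases Nat.eq_or_lt_of_le this with rfl | h
      · exact absurd hi hnk'
      · omega
    · intro h
      constructor
      · intro i hi; have := h i hi; omega
      · intro hmem
        have := h k hmem
        omega


lemma pkv_1_0 : pk 1 0 = 1 := pk_zero_right 1
lemma pkv_2_1 : pk 2 1 = 0 := pk_eq_zero (by norm_num) (by norm_num)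
lemma pkv_1_1 : pk 1 1 = 1 := by
  rw [pk_rec (by norm_num) (by norm_num)]
  norm_num [pkv_1_0, pkv_2_1]
lemma pkv_2_0 : pk 2 0 = 1 := pk_zero_right 2
lemma pkv_3_2 : pk 3 2 = 0 := pk_eq_zero (by norm_num) (by norm_num)
lemma pkv_2_2 : pk 2 2 = 1 := by
  rw [pk_rec (by norm_num) (by norm_num)]
  norm_num [pkv_2_0, pkv_3_2]
lemma pkv_1_2 : pk 1 2 = 2 := by
  rw [pk_rec (by norm_num) (by norm_num)]
  norm_num [pkv_1_1, pkv_2_2]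
lemma pkv_3_0 : pk 3 0 = 1 := pk_zero_right 3
lemma pkv_4_3 : pk 4 3 = 0 := pk_eq_zero (by norm_num) (by norm_num)
lemma pkv_3_3 : pk 3 3 = 1 := by
  rw [pk_rec (by norm_num) (by norm_num)]
  norm_num [pkv_3_0, pkv_4_3]
lemma pkv_2_3 : pk 2 3 = 1 := by
  rw [pk_rec (by norm_num) (by norm_num)]
  norm_num [pkv_2_1, pkv_3_3]
lemma pkv_1_3 : pk 1 3 = 3 := by
  rw [pk_rec (by norm_num) (by norm_num)]
  norm_num [pkv_1_2, pkv_2_3]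
lemma pkv_3_1 : pk 3 1 = 0 := pk_eq_zero (by norm_num) (by norm_num)
lemma pkv_4_0 : pk 4 0 = 1 := pk_zero_right 4
lemma pkv_5_4 : pk 5 4 = 0 := pk_eq_zero (by norm_num) (by norm_num)
lemma pkv_4_4 : pk 4 4 = 1 := by
  rw [pk_rec (by norm_num) (by norm_num)]
  norm_num [pkv_4_0, pkv_5_4]
lemma pkv_3_4 : pk 3 4 = 1 := by
  rw [pk_rec (by norm_num) (by norm_num)]
  norm_num [pkv_3_1, pkv_4_4]
lemma pkv_2_4 : pk 2 4 = 2 := by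
  rw [pk_rec (by norm_num) (by norm_num)]
  norm_num [pkv_2_2, pkv_3_4]
lemma pkv_1_4 : pk 1 4 = 5 := by
  rw [pk_rec (by norm_num) (by norm_num)]
  norm_num [pkv_1_3, pkv_2_4]
lemma pkv_4_1 : pk 4 1 = 0 := pk_eq_zero (by norm_num) (by norm_num)
lemma pkv_5_0 : pk 5 0 = 1 := pk_zero_right 5
lemma pkv_6_5 : pk 6 5 = 0 := pk_eq_zero (by norm_num) (by norm_num)
lemma pkv_5_5 : pk 5 5 = 1 := by
  rw [pk_rec (by norm_num) (by norm_num)]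
  norm_num [pkv_5_0, pkv_6_5]
lemma pkv_4_5 : pk 4 5 = 1 := by
  rw [pk_rec (by norm_num) (by norm_num)]
  norm_num [pkv_4_1, pkv_5_5]
lemma pkv_3_5 : pk 3 5 = 1 := by
  rw [pk_rec (by norm_num) (by norm_num)]
  norm_num [pkv_3_2, pkv_4_5]
lemma pkv_2_5 : pk 2 5 = 2 := by
  rw [pk_rec (by norm_num) (by norm_num)]
  norm_num [pkv_2_3, pkv_3_5]
lemma pkv_1_5 : pk 1 5 = 7 := by
  rw [pk_rec (by norm_num) (by norm_num)]
  norm_num [pkv_1_4, pkv_2_5]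
lemma pkv_4_2 : pk 4 2 = 0 := pk_eq_zero (by norm_num) (by norm_num)
lemma pkv_5_1 : pk 5 1 = 0 := pk_eq_zero (by norm_num) (by norm_num)
lemma pkv_6_0 : pk 6 0 = 1 := pk_zero_right 6
lemma pkv_7_6 : pk 7 6 = 0 := pk_eq_zero (by norm_num) (by norm_num)
lemma pkv_6_6 : pk 6 6 = 1 := by
  rw [pk_rec (by norm_num) (by norm_num)]
  norm_num [pkv_6_0, pkv_7_6]
lemma pkv_5_6 : pk 5 6 = 1 := by
  rw [pk_rec (by norm_num) (by norm_num)]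
  norm_num [pkv_5_1, pkv_6_6]
lemma pkv_4_6 : pk 4 6 = 1 := by
  rw [pk_rec (by norm_num) (by norm_num)]
  norm_num [pkv_4_2, pkv_5_6]
lemma pkv_3_6 : pk 3 6 = 2 := by
  rw [pk_rec (by norm_num) (by norm_num)]
  norm_num [pkv_3_3, pkv_4_6]
lemma pkv_2_6 : pk 2 6 = 4 := by
  rw [pk_rec (by norm_num) (by norm_num)]
  norm_num [pkv_2_4, pkv_3_6]
lemma pkv_1_6 : pk 1 6 = 11 := by
  rw [pk_rec (by norm_num) (by norm_num)]
  norm_num [pkv_1_5, pkv_2_6]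
lemma pkv_5_2 : pk 5 2 = 0 := pk_eq_zero (by norm_num) (by norm_num)
lemma pkv_6_1 : pk 6 1 = 0 := pk_eq_zero (by norm_num) (by norm_num)
lemma pkv_7_0 : pk 7 0 = 1 := pk_zero_right 7
lemma pkv_8_7 : pk 8 7 = 0 := pk_eq_zero (by norm_num) (by norm_num)
lemma pkv_7_7 : pk 7 7 = 1 := by
  rw [pk_rec (by norm_num) (by norm_num)]
  norm_num [pkv_7_0, pkv_8_7]
lemma pkv_6_7 : pk 6 7 = 1 := by
  rw [pk_rec (by norm_num) (by norm_num)]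
  norm_num [pkv_6_1, pkv_7_7]
lemma pkv_5_7 : pk 5 7 = 1 := by
  rw [pk_rec (by norm_num) (by norm_num)]
  norm_num [pkv_5_2, pkv_6_7]
lemma pkv_4_7 : pk 4 7 = 1 := by
  rw [pk_rec (by norm_num) (by norm_num)]
  norm_num [pkv_4_3, pkv_5_7]
lemma pkv_3_7 : pk 3 7 = 2 := by
  rw [pk_rec (by norm_num) (by norm_num)]
  norm_num [pkv_3_4, pkv_4_7]
lemma pkv_2_7 : pk 2 7 = 4 := by
  rw [pk_rec (by norm_num) (by norm_num)]
  norm_num [pkv_2_5, pkv_3_7]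
lemma pkv_1_7 : pk 1 7 = 15 := by
  rw [pk_rec (by norm_num) (by norm_num)]
  norm_num [pkv_1_6, pkv_2_7]
lemma pkv_5_3 : pk 5 3 = 0 := pk_eq_zero (by norm_num) (by norm_num)
lemma pkv_6_2 : pk 6 2 = 0 := pk_eq_zero (by norm_num) (by norm_num)
lemma pkv_7_1 : pk 7 1 = 0 := pk_eq_zero (by norm_num) (by norm_num)
lemma pkv_8_0 : pk 8 0 = 1 := pk_zero_right 8
lemma pkv_9_8 : pk 9 8 = 0 := pk_eq_zero (by norm_num) (by norm_num)
lemma pkv_8_8 : pk 8 8 = 1 := by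
  rw [pk_rec (by norm_num) (by norm_num)]
  norm_num [pkv_8_0, pkv_9_8]
lemma pkv_7_8 : pk 7 8 = 1 := by
  rw [pk_rec (by norm_num) (by norm_num)]
  norm_num [pkv_7_1, pkv_8_8]
lemma pkv_6_8 : pk 6 8 = 1 := by
  rw [pk_rec (by norm_num) (by norm_num)]
  norm_num [pkv_6_2, pkv_7_8]
lemma pkv_5_8 : pk 5 8 = 1 := by
  rw [pk_rec (by norm_num) (by norm_num)]
  norm_num [pkv_5_3, pkv_6_8]
lemma pkv_4_8 : pk 4 8 = 2 := by
  rw [pk_rec (by norm_num) (by norm_num)]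
  norm_num [pkv_4_4, pkv_5_8]
lemma pkv_3_8 : pk 3 8 = 3 := by
  rw [pk_rec (by norm_num) (by norm_num)]
  norm_num [pkv_3_5, pkv_4_8]
lemma pkv_2_8 : pk 2 8 = 7 := by
  rw [pk_rec (by norm_num) (by norm_num)]
  norm_num [pkv_2_6, pkv_3_8]
lemma pkv_1_8 : pk 1 8 = 22 := by
  rw [pk_rec (by norm_num) (by norm_num)]
  norm_num [pkv_1_7, pkv_2_8]
lemma pkv_6_3 : pk 6 3 = 0 := pk_eq_zero (by norm_num) (by norm_num)
lemma pkv_7_2 : pk 7 2 = 0 := pk_eq_zero (by norm_num) (by norm_num)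
lemma pkv_8_1 : pk 8 1 = 0 := pk_eq_zero (by norm_num) (by norm_num)
lemma pkv_9_0 : pk 9 0 = 1 := pk_zero_right 9
lemma pkv_10_9 : pk 10 9 = 0 := pk_eq_zero (by norm_num) (by norm_num)
lemma pkv_9_9 : pk 9 9 = 1 := by
  rw [pk_rec (by norm_num) (by norm_num)]
  norm_num [pkv_9_0, pkv_10_9]
lemma pkv_8_9 : pk 8 9 = 1 := by
  rw [pk_rec (by norm_num) (by norm_num)]
  norm_num [pkv_8_1, pkv_9_9]
lemma pkv_7_9 : pk 7 9 = 1 := by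
  rw [pk_rec (by norm_num) (by norm_num)]
  norm_num [pkv_7_2, pkv_8_9]
lemma pkv_6_9 : pk 6 9 = 1 := by
  rw [pk_rec (by norm_num) (by norm_num)]
  norm_num [pkv_6_3, pkv_7_9]
lemma pkv_5_9 : pk 5 9 = 1 := by
  rw [pk_rec (by norm_num) (by norm_num)]
  norm_num [pkv_5_4, pkv_6_9]
lemma pkv_4_9 : pk 4 9 = 2 := by
  rw [pk_rec (by norm_num) (by norm_num)]
  norm_num [pkv_4_5, pkv_5_9]
lemma pkv_3_9 : pk 3 9 = 4 := by
  rw [pk_rec (by norm_num) (by norm_num)]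
  norm_num [pkv_3_6, pkv_4_9]
lemma pkv_2_9 : pk 2 9 = 8 := by
  rw [pk_rec (by norm_num) (by norm_num)]
  norm_num [pkv_2_7, pkv_3_9]
lemma pkv_1_9 : pk 1 9 = 30 := by
  rw [pk_rec (by norm_num) (by norm_num)]
  norm_num [pkv_1_8, pkv_2_9]
lemma pkv_6_4 : pk 6 4 = 0 := pk_eq_zero (by norm_num) (by norm_num)
lemma pkv_7_3 : pk 7 3 = 0 := pk_eq_zero (by norm_num) (by norm_num)
lemma pkv_8_2 : pk 8 2 = 0 := pk_eq_zero (by norm_num) (by norm_num)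
lemma pkv_9_1 : pk 9 1 = 0 := pk_eq_zero (by norm_num) (by norm_num)
lemma pkv_10_0 : pk 10 0 = 1 := pk_zero_right 10
lemma pkv_11_10 : pk 11 10 = 0 := pk_eq_zero (by norm_num) (by norm_num)
lemma pkv_10_10 : pk 10 10 = 1 := by
  rw [pk_rec (by norm_num) (by norm_num)]
  norm_num [pkv_10_0, pkv_11_10]
lemma pkv_9_10 : pk 9 10 = 1 := by
  rw [pk_rec (by norm_num) (by norm_num)]
  norm_num [pkv_9_1, pkv_10_10]
lemma pkv_8_10 : pk 8 10 = 1 := by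
  rw [pk_rec (by norm_num) (by norm_num)]
  norm_num [pkv_8_2, pkv_9_10]
lemma pkv_7_10 : pk 7 10 = 1 := by
  rw [pk_rec (by norm_num) (by norm_num)]
  norm_num [pkv_7_3, pkv_8_10]
lemma pkv_6_10 : pk 6 10 = 1 := by
  rw [pk_rec (by norm_num) (by norm_num)]
  norm_num [pkv_6_4, pkv_7_10]
lemma pkv_5_10 : pk 5 10 = 2 := by
  rw [pk_rec (by norm_num) (by norm_num)]
  norm_num [pkv_5_5, pkv_6_10]
lemma pkv_4_10 : pk 4 10 = 3 := by
  rw [pk_rec (by norm_num) (by norm_num)]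
  norm_num [pkv_4_6, pkv_5_10]
lemma pkv_3_10 : pk 3 10 = 5 := by
  rw [pk_rec (by norm_num) (by norm_num)]
  norm_num [pkv_3_7, pkv_4_10]
lemma pkv_2_10 : pk 2 10 = 12 := by
  rw [pk_rec (by norm_num) (by norm_num)]
  norm_num [pkv_2_8, pkv_3_10]
lemma pkv_1_10 : pk 1 10 = 42 := by
  rw [pk_rec (by norm_num) (by norm_num)]
  norm_num [pkv_1_9, pkv_2_10]


lemma parts_ne_zero {m : ℕ} (P : m.Partition) (hm : 0 < m) : P.parts ≠ 0 := by
  intro h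
  have := P.parts_sum
  rw [h] at this
  simp at this
  omega

lemma sup_mem {s : Multiset ℕ} (h : s ≠ 0) : s.sup ∈ s := by
  induction s using Multiset.induction_on with
  | empty => exact absurd rfl h
  | cons a s ih =>
    rw [Multiset.sup_cons]
    rcases eq_or_ne s 0 with rfl | hs
    · simp
    · rcases le_total a s.sup with h1 | h1
      · rw [sup_eq_right.2 h1]
        exact Multiset.mem_cons_of_mem (ih hs)
      · rw [sup_eq_left.2 h1]
        exact Multiset.mem_cons_self a s

/-- bump the largest part by `y - x`. -/
def bump {x : ℕ} (y : ℕ) (hxy : x ≤ y) (hx : 0 < x) (P : x.Partition) : y.Partition where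
  parts := (P.parts.sup + (y - x)) ::ₘ P.parts.erase P.parts.sup
  parts_pos := by
    intro i hi
    rcases Multiset.mem_cons.1 hi with rfl | h
    · have := P.parts_pos (sup_mem (parts_ne_zero P hx))
      omega
    · exact P.parts_pos (Multiset.mem_of_mem_erase h)
  parts_sum := by
    have hmem := sup_mem (parts_ne_zero P hx)
    have h2 := Multiset.sum_erase hmem
    rw [P.parts_sum] at h2
    rw [Multiset.sum_cons]
    omega

lemma bump_sup {x : ℕ} (y : ℕ) (hxy : x ≤ y) (hx : 0 < x) (P : x.Partition) :
    (bump y hxy hx P).parts.sup = P.parts.sup + (y - x) := by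
  rw [bump, Multiset.sup_cons, sup_eq_left]
  have : ∀ i ∈ P.parts.erase P.parts.sup, i ≤ P.parts.sup + (y - x) := by
    intro i hi
    have := Multiset.le_sup (Multiset.mem_of_mem_erase hi)
    omega
  exact Multiset.sup_le.2 this

lemma bump_count {x : ℕ} (y : ℕ) (hxy : x ≤ y) (hx : 0 < x) (P : x.Partition)
    (hlt : x < y) :
    (bump y hxy hx P).parts.count ((bump y hxy hx P).parts.sup) = 1 := by
  rw [bump_sup]
  show Multiset.count _ ((P.parts.sup + (y - x)) ::ₘ P.parts.erase P.parts.sup) = 1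
  rw [Multiset.count_cons_self]
  have : P.parts.sup + (y - x) ∉ P.parts.erase P.parts.sup := by
    intro hmem
    have := Multiset.le_sup (Multiset.mem_of_mem_erase hmem)
    omega
  rw [Multiset.count_eq_zero_of_notMem this]

lemma bump_injOn {x : ℕ} (y : ℕ) (hxy : x ≤ y) (hx : 0 < x) {P Q : x.Partition}
    (h : bump y hxy hx P = bump y hxy hx Q) : P = Q := by
  have hsup : P.parts.sup = Q.parts.sup := by
    have h1 : (bump y hxy hx P).parts.sup = (bump y hxy hx Q).parts.sup := by rw [h]
    rw [bump_sup, bump_sup] at h1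
    omega
  have hparts : (P.parts.sup + (y - x)) ::ₘ P.parts.erase P.parts.sup
      = (Q.parts.sup + (y - x)) ::ₘ Q.parts.erase Q.parts.sup :=
    congrArg Nat.Partition.parts h
  rw [hsup] at hparts
  have herase := (Multiset.cons_inj_right _).1 hparts
  ext1
  rw [← Multiset.cons_erase (sup_mem (parts_ne_zero P hx)),
    ← Multiset.cons_erase (sup_mem (parts_ne_zero Q hx)), hsup, herase]

lemma bump_card {x : ℕ} (y : ℕ) (hxy : x ≤ y) (hx : 0 < x) (P : x.Partition) :
    Multiset.card (bump y hxy hx P).parts = Multiset.card P.parts := by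
  show Multiset.card (_ ::ₘ P.parts.erase P.parts.sup) = _
  rw [Multiset.card_cons, Multiset.card_erase_of_mem (sup_mem (parts_ne_zero P hx))]
  have : 1 ≤ Multiset.card P.parts := by
    rw [Nat.one_le_iff_ne_zero, Ne, Multiset.card_eq_zero]
    exact parts_ne_zero P hx
  simp only [Nat.pred_eq_sub_one]
  omega


lemma pparts_zero_left {m : ℕ} (hm : 0 < m) : pparts 0 m = 0 := by
  rw [pparts, Finset.card_eq_zero, Finset.filter_eq_empty_iff]
  intro P _ h
  exact parts_ne_zero P hm (Multiset.card_eq_zero.1 h)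

lemma pparts_one {m : ℕ} (hm : 0 < m) : pparts 1 m = 1 := by
  rw [pparts, Finset.card_eq_one]
  refine ⟨⟨{m}, by rintro i hi; simp at hi; omega, by simp⟩, ?_⟩
  ext P
  simp only [Finset.mem_filter, Finset.mem_univ, true_and, Finset.mem_singleton]
  constructor
  · intro h
    obtain ⟨a, ha⟩ := Multiset.card_eq_one.1 h
    have := P.parts_sum
    rw [ha] at this
    simp at this
    ext1
    rw [ha, this]
  · rintro rfl
    simp


lemma pparts_eq_zero {r m : ℕ} (h : m < r) : pparts r m = 0 := by
  rw [pparts, Finset.card_eq_zero, Finset.filter_eq_empty_iff]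
  intro P _ hc
  have h1 : ∀ i ∈ P.parts, 1 ≤ i := fun i hi => P.parts_pos hi
  have h2 := Multiset.card_nsmul_le_sum h1
  rw [P.parts_sum] at h2
  simp [hc] at h2
  omega

lemma pparts_mono {r x y : ℕ} (hr : 1 ≤ r) (hxy : x ≤ y) : pparts r x ≤ pparts r y := by
  rcases Nat.lt_or_ge x r with h | hxr
  · rw [pparts_eq_zero h]
    omega
  have hx : 0 < x := by omega
  rw [pparts, pparts]
  apply Finset.card_le_card_of_injOn (bump y hxy hx)
  · intro P hP
    simp only [Finset.mem_coe, Finset.mem_filter, Finset.mem_univ, true_and] at hP ⊢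
    rw [bump_card]
    exact hP
  · intro P _ Q _ h
    exact bump_injOn y hxy hx h

lemma pparts_four_strict {c : ℕ} (hc : 6 ≤ c) (hce : c % 2 = 0) :
    pparts 4 c + 1 ≤ pparts 4 (c + 1) := by
  have hx : 0 < c := by omega
  have hxy : c ≤ c + 1 := by omega
  set t := (c - 2) / 2 with ht
  have h2t : 2 * t = c - 2 := by omega
  have htge : 2 ≤ t := by omega
  -- the witness: {t, t, 2, 1}
  have Wsum : (t ::ₘ t ::ₘ 2 ::ₘ ({1} : Multiset ℕ)).sum = c + 1 := by
    simp [Multiset.sum_cons]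
    omega
  set W : (c+1).Partition := ⟨t ::ₘ t ::ₘ 2 ::ₘ ({1} : Multiset ℕ), by
    intro i hi
    simp [Multiset.mem_cons, Multiset.mem_singleton] at hi
    rcases hi with rfl | rfl | rfl | rfl <;> omega, Wsum⟩ with hW
  have hWsup : W.parts.sup = t := by
    show ((t ::ₘ t ::ₘ 2 ::ₘ ({1} : Multiset ℕ)).sup) = t
    simp [Multiset.sup_cons]
    omega
  have hWcount : 2 ≤ Multiset.count W.parts.sup W.parts := by
    rw [hWsup]
    show 2 ≤ Multiset.count t (t ::ₘ t ::ₘ 2 ::ₘ ({1} : Multiset ℕ))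
    rw [Multiset.count_cons_self, Multiset.count_cons_self]
    omega
  rw [pparts, pparts]
  set A := Finset.univ.filter (fun P : c.Partition => Multiset.card P.parts = 4) with hA
  set B := Finset.univ.filter (fun P : (c+1).Partition => Multiset.card P.parts = 4) with hB
  have hWB : W ∈ B := by
    rw [hB]
    simp only [Finset.mem_filter, Finset.mem_univ, true_and]
    show Multiset.card (t ::ₘ t ::ₘ 2 ::ₘ ({1} : Multiset ℕ)) = 4
    simp
  have himg : A.image (bump (c+1) hxy hx) ⊆ B.erase W := by
    intro Q hQ
    simp only [Finset.mem_image] at hQ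
    obtain ⟨P, hP, rfl⟩ := hQ
    rw [Finset.mem_erase]
    constructor
    · intro hEq
      have := bump_count (c+1) hxy hx P (by omega)
      rw [hEq] at this
      omega
    · simp only [hB, Finset.mem_filter, Finset.mem_univ, true_and]
      rw [bump_card]
      simp only [hA, Finset.mem_filter, Finset.mem_univ, true_and] at hP
      exact hP
  have hinj : (A.image (bump (c+1) hxy hx)).card = A.card :=
    Finset.card_image_of_injOn (fun P _ Q _ h => bump_injOn (c+1) hxy hx h)
  have h1 := Finset.card_le_card himg
  rw [hinj, Finset.card_erase_of_mem hWB] at h1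
  have h2 : 1 ≤ B.card := Finset.card_pos.2 ⟨W, hWB⟩
  omega


lemma pparts_self (a : ℕ) : pparts a a = 1 := by
  rw [pparts, Finset.card_eq_one]
  refine ⟨⟨Multiset.replicate a 1, by intro i hi; rw [Multiset.eq_of_mem_replicate hi]; omega,
    by simp [Multiset.sum_replicate]⟩, ?_⟩
  ext P
  simp only [Finset.mem_filter, Finset.mem_univ, true_and, Finset.mem_singleton]
  constructor
  · intro h
    have hall : ∀ i ∈ P.parts, i = 1 := by
      by_contra hc
      push_neg at hc
      obtain ⟨i, hi, hne⟩ := hc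
      have hi2 : 2 ≤ i := by
        have := P.parts_pos hi
        omega
      have hsum := Multiset.sum_erase hi
      rw [P.parts_sum] at hsum
      have hce : Multiset.card (P.parts.erase i) = Multiset.card P.parts - 1 := by
        rw [Multiset.card_erase_of_mem hi]
        simp [Nat.pred_eq_sub_one]
      have hle : Multiset.card (P.parts.erase i) ≤ (P.parts.erase i).sum :=
        card_le_sum (fun j hj => P.parts_pos (Multiset.mem_of_mem_erase hj))
      omega
    apply Nat.Partition.ext
    rw [Multiset.eq_replicate]
    exact ⟨h, hall⟩
  · rintro rfl
    simp

lemma pparts_two (m : ℕ) : pparts 2 m = m / 2 := by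
  have hIcc : (Finset.Icc 1 (m / 2)).card = m / 2 := by
    rw [Nat.card_Icc]
    omega
  rw [pparts, ← hIcc]
  apply Finset.card_bij (fun P _ => m - P.parts.sup)
  · intro P hP
    simp only [Finset.mem_filter, Finset.mem_univ, true_and] at hP
    obtain ⟨x, y, hxy⟩ := Multiset.card_eq_two.1 hP
    have hsum := P.parts_sum
    rw [hxy] at hsum
    simp [Multiset.sum_cons] at hsum
    have hxmem : x ∈ P.parts := by rw [hxy]; exact Multiset.mem_cons_self x _
    have hymem : y ∈ P.parts := by rw [hxy]; simp
    have hx := P.parts_pos hxmem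
    have hy := P.parts_pos hymem
    have hsup : P.parts.sup = max x y := by
      rw [hxy]
      show (x ::ₘ ({y} : Multiset ℕ)).sup = max x y
      simp [Multiset.sup_cons]
    rw [Finset.mem_Icc, hsup]
    omega
  · intro P hP Q hQ h
    simp only [Finset.mem_filter, Finset.mem_univ, true_and] at hP hQ
    obtain ⟨x, y, hxy⟩ := Multiset.card_eq_two.1 hP
    obtain ⟨z, w, hzw⟩ := Multiset.card_eq_two.1 hQ
    have hsumP := P.parts_sum; rw [hxy] at hsumP; simp [Multiset.sum_cons] at hsumP
    have hsumQ := Q.parts_sum; rw [hzw] at hsumQ; simp [Multiset.sum_cons] at hsumQ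
    have hsupP : P.parts.sup = max x y := by
      rw [hxy]; show (x ::ₘ ({y} : Multiset ℕ)).sup = max x y; simp [Multiset.sup_cons]
    have hsupQ : Q.parts.sup = max z w := by
      rw [hzw]; show (z ::ₘ ({w} : Multiset ℕ)).sup = max z w; simp [Multiset.sup_cons]
    rw [hsupP, hsupQ] at h
    apply Nat.Partition.ext
    rw [hxy, hzw]
    have hxmem : x ∈ P.parts := by rw [hxy]; exact Multiset.mem_cons_self x _
    have hymem : y ∈ P.parts := by rw [hxy]; simp
    have hzmem : z ∈ Q.parts := by rw [hzw]; exact Multiset.mem_cons_self z _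
    have hwmem : w ∈ Q.parts := by rw [hzw]; simp
    have hx := P.parts_pos hxmem
    have hy := P.parts_pos hymem
    have hz := Q.parts_pos hzmem
    have hw := Q.parts_pos hwmem
    -- {x, y} and {z, w} with x+y = z+w = m and m - max equal
    rcases le_total x y with h1 | h1 <;> rcases le_total z w with h2 | h2
    · rw [max_eq_right h1, max_eq_right h2] at h
      have e1 : y = w := by omega
      have e2 : x = z := by omega
      rw [e1, e2]
    · rw [max_eq_right h1, max_eq_left h2] at h
      have e1 : y = z := by omega
      have e2 : x = w := by omega
      rw [e1, e2]
      exact Multiset.pair_comm w z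
    · rw [max_eq_left h1, max_eq_right h2] at h
      have e1 : x = w := by omega
      have e2 : y = z := by omega
      rw [e1, e2]
      exact Multiset.pair_comm w z
    · rw [max_eq_left h1, max_eq_left h2] at h
      have e1 : x = z := by omega
      have e2 : y = w := by omega
      rw [e1, e2]
  · intro u hu
    rw [Finset.mem_Icc] at hu
    have h2u : 2 * u ≤ m := by
      have := Nat.div_mul_le_self m 2
      have h1 := hu.2
      omega
    refine ⟨⟨(m - u) ::ₘ ({u} : Multiset ℕ), ?_, ?_⟩, ?_, ?_⟩
    · intro i hi
      simp [Multiset.mem_cons] at hi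
      rcases hi with rfl | rfl <;> omega
    · simp [Multiset.sum_cons]
      omega
    · simp only [Finset.mem_filter, Finset.mem_univ, true_and]
      rfl
    · show m - ((m - u) ::ₘ ({u} : Multiset ℕ)).sup = u
      have : ((m - u) ::ₘ ({u} : Multiset ℕ)).sup = m - u := by
        simp [Multiset.sup_cons]
        omega
      rw [this]
      omega


lemma sum_map_add_const (s : Multiset ℕ) (j : ℕ) :
    (s.map (· + j)).sum = s.sum + Multiset.card s * j := by
  induction s using Multiset.induction_on with
  | empty => simp
  | cons a s ih =>
    simp only [Multiset.map_cons, Multiset.sum_cons, Multiset.card_cons, ih]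
    ring

lemma pkr_le_pparts (k r m : ℕ) : pkr k r m ≤ pparts r m := by
  apply Finset.card_le_card
  intro P hP
  simp only [Finset.mem_filter, Finset.mem_univ, true_and] at hP ⊢
  exact hP.2

lemma pkr_eq_zero {k r m : ℕ} (h : m < r * k) : pkr k r m = 0 := by
  rw [pkr, Finset.card_eq_zero, Finset.filter_eq_empty_iff]
  rintro P _ ⟨hall, hcard⟩
  have := sum_ge_card_mul hall
  rw [P.parts_sum, hcard] at this
  omega

lemma pkr_shift (j r x : ℕ) : pkr (j + 1) r (x + r * j) = pparts r x := by
  rw [pkr, pparts]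
  symm
  apply Finset.card_bij (fun (P : x.Partition)
      (hP : P ∈ Finset.univ.filter (fun P : x.Partition => Multiset.card P.parts = r)) =>
    (⟨P.parts.map (· + j), fun {i} hi => by
        obtain ⟨a, ha, rfl⟩ := Multiset.mem_map.1 hi
        have := P.parts_pos ha
        omega, by
        rw [sum_map_add_const, P.parts_sum, (Finset.mem_filter.1 hP).2]⟩ :
      (x + r * j).Partition))
  · intro P hP
    simp only [Finset.mem_filter, Finset.mem_univ, true_and] at hP ⊢
    constructor
    · intro i hi
      obtain ⟨a, ha, rfl⟩ := Multiset.mem_map.1 hi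
      have := P.parts_pos ha
      omega
    · rw [Multiset.card_map]
      exact hP
  · intro P hP Q hQ h
    have h' : P.parts.map (· + j) = Q.parts.map (· + j) := congrArg Nat.Partition.parts h
    have hinj : Function.Injective (· + j : ℕ → ℕ) := add_left_injective j
    ext1
    exact Multiset.map_injective hinj h'
  · intro Q hQ
    simp only [Finset.mem_filter, Finset.mem_univ, true_and] at hQ
    obtain ⟨hall, hcard⟩ := hQ
    set T := Q.parts.map (· - j) with hT
    have hTT : T.map (· + j) = Q.parts := by
      rw [hT, Multiset.map_map]
      have : ∀ a ∈ Q.parts, (a - j) + j = a := by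
        intro a ha
        have := hall a ha
        omega
      calc Q.parts.map ((· + j) ∘ (· - j)) = Q.parts.map id := Multiset.map_congr rfl this
        _ = Q.parts := Multiset.map_id _
    have hcardT : Multiset.card T = r := by rw [hT, Multiset.card_map, hcard]
    have hsumT : T.sum = x := by
      have h1 : (T.map (· + j)).sum = T.sum + Multiset.card T * j := sum_map_add_const T j
      rw [hTT, Q.parts_sum, hcardT] at h1
      omega
    refine ⟨⟨T, fun {i} hi => ?_, hsumT⟩, ?_, ?_⟩
    · rw [hT] at hi
      obtain ⟨a, ha, rfl⟩ := Multiset.mem_map.1 hi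
      have := hall a ha
      omega
    · simp only [Finset.mem_filter, Finset.mem_univ, true_and]
      exact hcardT
    · ext1
      exact hTT

lemma pk_eq_sum_pkr (k m : ℕ) :
    pk k m = ∑ r ∈ Finset.range (m + 1), pkr k r m := by
  rw [pk]
  rw [Finset.card_eq_sum_card_fiberwise
    (f := fun P : m.Partition => Multiset.card P.parts) (t := Finset.range (m + 1))]
  · apply Finset.sum_congr rfl
    intro r _
    rw [pkr, Finset.filter_filter]
  · intro P hP
    simp only [Finset.mem_coe, Finset.mem_range]
    have := card_le_sum (fun i hi => P.parts_pos hi)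
    rw [P.parts_sum] at this
    omega


lemma pkr_one (r a : ℕ) : pkr 1 r a = pparts r a := by
  have := pkr_shift 0 r a
  simpa using this

lemma pkr_as_pparts {k r m : ℕ} (hk : 1 ≤ k) (h : r * (k - 1) ≤ m) :
    pkr k r m = pparts r (m - r * (k - 1)) := by
  have := pkr_shift (k - 1) r (m - r * (k - 1))
  rw [show (k - 1) + 1 = k by omega, show (m - r * (k - 1)) + r * (k - 1) = m by omega] at this
  exact this

/-- generic termwise bound, any r ≠ 2 -/
lemma pkr_term_le {k a n r : ℕ} (hk : 2 ≤ k) (ha : 1 ≤ a) (hkn : k ≤ n) (hn : n ≤ 2 * k - 1)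
    (hr2 : r ≠ 2) : pkr k r (a + n) ≤ pparts r a := by
  rcases Nat.eq_zero_or_pos r with rfl | hrpos
  · have h1 := pkr_le_pparts k 0 (a + n)
    have h2 : pparts 0 (a + n) = 0 := pparts_zero_left (by omega)
    omega
  rcases eq_or_ne r 1 with rfl | hr1
  · have h1 := pkr_le_pparts k 1 (a + n)
    rw [pparts_one (show (0:ℕ) < a + n by omega)] at h1
    rw [pparts_one (show (0:ℕ) < a by omega)]
    omega
  have hr3 : 3 ≤ r := by omega
  rcases le_or_gt (r * (k - 1)) (a + n) with hle | hlt
  · rw [pkr_as_pparts (by omega) hle]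
    apply pparts_mono (by omega)
    have h3 : 3 * (k - 1) ≤ r * (k - 1) := Nat.mul_le_mul_right _ hr3
    omega
  · have : a + n < r * k := by
      have : r * (k - 1) ≤ r * k := Nat.mul_le_mul_left _ (by omega)
      omega
    rw [pkr_eq_zero this]
    omega

lemma sum_pair_le {N : ℕ} (f g : ℕ → ℕ) (r1 r2 : ℕ) (h12 : r1 ≠ r2)
    (hr1 : r1 ∈ Finset.range N) (hr2 : r2 ∈ Finset.range N)
    (hterm : ∀ r ∈ Finset.range N, r ≠ r1 → r ≠ r2 → f r ≤ g r)
    (hpair : f r1 + f r2 ≤ g r1 + g r2) :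
    ∑ r ∈ Finset.range N, f r ≤ ∑ r ∈ Finset.range N, g r := by
  have hsub : ({r1, r2} : Finset ℕ) ⊆ Finset.range N := by
    intro x hx
    rcases Finset.mem_insert.1 hx with rfl | hx
    · exact hr1
    · rw [Finset.mem_singleton] at hx
      subst hx
      exact hr2
  rw [← Finset.sum_sdiff hsub, ← Finset.sum_sdiff hsub (f := g)]
  apply Nat.add_le_add
  · apply Finset.sum_le_sum
    intro i hi
    rw [Finset.mem_sdiff, Finset.mem_insert, Finset.mem_singleton] at hi
    push_neg at hi
    exact hterm i hi.1 hi.2.1 hi.2.2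
  · rw [Finset.sum_pair h12, Finset.sum_pair h12]
    exact hpair

lemma base_le {k a n : ℕ} (hk : 2 ≤ k) (ha : 2 ≤ a) (hkn : k ≤ n) (hn : n ≤ 2 * k - 1)
    (hexc : ¬(k = 2 ∧ a = 3 ∧ n = 3)) : pk k (a + n) ≤ pk 1 a := by
  rw [pk_eq_sum_pkr k (a + n), pk_eq_sum_pkr 1 a]
  have hext : ∑ r ∈ Finset.range (a + 1), pkr 1 r a
      = ∑ r ∈ Finset.range (a + n + 1), pkr 1 r a := by
    apply Finset.sum_subset
    · apply Finset.range_subset_range.2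
      omega
    · intro x _ hx
      rw [Finset.mem_range, not_lt] at hx
      exact pkr_eq_zero (by omega)
  rw [hext]
  by_cases hpairing : n = 2 * k - 1 ∧ a % 2 = 1
  · obtain ⟨hn', hodd⟩ := hpairing
    have hf2 : pkr k 2 (a + n) = pparts 2 (a + 1) := by
      rw [pkr_as_pparts (by omega) (by omega), show a + n - 2 * (k - 1) = a + 1 by omega]
    rcases le_or_gt 3 k with hk3 | hk2
    · -- pair {2, a}
      apply sum_pair_le _ _ 2 a (by omega) (by rw [Finset.mem_range]; omega)
        (by rw [Finset.mem_range]; omega)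
      · intro r _ hra hrb
        rw [pkr_one]
        exact pkr_term_le hk (by omega) hkn hn hra
      · have hfa : pkr k a (a + n) = 0 := by
          apply pkr_eq_zero
          rcases le_total a k with hak | hak
          · have : 3 * k ≤ a * k := Nat.mul_le_mul_right _ (by omega)
            omega
          · have : a * 3 ≤ a * k := Nat.mul_le_mul_left _ (by omega)
            omega
        rw [hf2, hfa, pkr_one, pkr_one, pparts_two, pparts_two, pparts_self]
        omega
    · -- k = 2, n = 3
      have hk2' : k = 2 := by omega
      have hn3 : n = 3 := by omega
      have ha5 : a = 5 ∨ 7 ≤ a := by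
        rcases Nat.lt_or_ge a 7 with h | h
        · left
          omega
        · right
          exact h
      rcases ha5 with rfl | ha7
      · -- a = 5 : pair {2, 5}
        subst hk2' hn3
        apply sum_pair_le _ _ 2 5 (by omega) (by rw [Finset.mem_range]; omega)
          (by rw [Finset.mem_range]; omega)
        · intro r _ hra hrb
          rw [pkr_one]
          exact pkr_term_le (by omega) (by omega) (by omega) (by omega) hra
        · have hf5 : pkr 2 5 (5 + 3) = pparts 5 3 := by
            have := pkr_shift 1 5 3
            simpa using this
          rw [hf2, hf5, pkr_one, pkr_one, pparts_two, pparts_two, pparts_self,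
            pparts_eq_zero (show (3:ℕ) < 5 by omega)]
      · -- a ≥ 7 odd : pair {2, 4}
        subst hk2' hn3
        apply sum_pair_le _ _ 2 4 (by omega) (by rw [Finset.mem_range]; omega)
          (by rw [Finset.mem_range]; omega)
        · intro r _ hra hrb
          rw [pkr_one]
          exact pkr_term_le (by omega) (by omega) (by omega) (by omega) hra
        · have hf4 : pkr 2 4 (a + 3) = pparts 4 (a - 1) := by
            have := pkr_shift 1 4 (a - 1)
            rw [show a - 1 + 4 * 1 = a + 3 by omega] at this
            exact this
          have hstrict : pparts 4 (a - 1) + 1 ≤ pparts 4 a := by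
            have := pparts_four_strict (c := a - 1) (by omega) (by omega)
            rw [show a - 1 + 1 = a by omega] at this
            exact this
          rw [hf2, hf4, pkr_one, pkr_one, pparts_two, pparts_two]
          omega
  · -- no pairing needed : termwise
    apply Finset.sum_le_sum
    intro r _
    rw [pkr_one]
    rcases eq_or_ne r 2 with rfl | hr2
    · -- r = 2
      rcases le_or_gt (2 * (k - 1)) (a + n) with hle | hlt
      · rw [pkr_as_pparts (by omega) hle]
        rcases Nat.lt_or_ge n (2 * k - 1) with hlt2 | hge2
        · apply pparts_mono (by omega)
          omega
        · have hn' : n = 2 * k - 1 := by omega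
          have heven : a % 2 = 0 := by
            by_contra hodd
            exact hpairing ⟨hn', by omega⟩
          rw [show a + n - 2 * (k - 1) = a + 1 by omega, pparts_two, pparts_two]
          omega
      · rw [pkr_eq_zero (show a + n < 2 * k by omega)]
        omega
    · exact pkr_term_le hk (by omega) hkn hn hr2


/-- The supermultiplicativity lemma for partitions with parts ≥ k. -/
lemma M : ∀ d k a n : ℕ, 2 * n - k ≤ d → 2 ≤ k → 2 ≤ a → k ≤ n →
    ¬(k = 2 ∧ a = 3 ∧ (n = 3 ∨ n = 5)) → pk k (a + n) ≤ pk 1 a * pk k n := by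
  intro d
  induction d using Nat.strong_induction_on with
  | _ d ih =>
    intro k a n hd hk ha hkn hexc
    by_cases hspec : k = 2 ∧ a = 3 ∧ n = 7
    · obtain ⟨rfl, rfl, rfl⟩ := hspec
      rw [show (3:ℕ) + 7 = 10 by norm_num, pkv_2_10, pkv_1_3, pkv_2_7]
    rcases Nat.lt_or_ge n (2 * k) with hwin | hbig
    · -- base window
      rw [pk_window hkn hwin (by omega)]
      rw [mul_one]
      apply base_le hk ha hkn (by omega)
      intro ⟨h1, h2, h3⟩
      exact hexc ⟨h1, h2, Or.inl h3⟩
    · -- recursive case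
      have h1 : pk k n = pk k (n - k) + pk (k + 1) n := pk_rec (by omega) (by omega)
      have h2 : pk k (a + n) = pk k (a + n - k) + pk (k + 1) (a + n) :=
        pk_rec (by omega) (by omega)
      have IH1 : pk k (a + (n - k)) ≤ pk 1 a * pk k (n - k) := by
        apply ih (2 * (n - k) - k) (by omega) k a (n - k) (by omega) hk ha (by omega)
        rintro ⟨rfl, rfl, hor⟩
        rcases hor with h5 | h7
        · exact hexc ⟨rfl, rfl, Or.inr (by omega)⟩
        · exact hspec ⟨rfl, rfl, by omega⟩
      have IH2 : pk (k + 1) (a + n) ≤ pk 1 a * pk (k + 1) n := by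
        apply ih (2 * n - (k + 1)) (by omega) (k + 1) a n (by omega) (by omega) ha (by omega)
        rintro ⟨hk1, -, -⟩
        omega
      rw [show a + n - k = a + (n - k) by omega] at h2
      calc pk k (a + n) = pk k (a + (n - k)) + pk (k + 1) (a + n) := h2
        _ ≤ pk 1 a * pk k (n - k) + pk 1 a * pk (k + 1) n := Nat.add_le_add IH1 IH2
        _ = pk 1 a * pk k n := by rw [h1, Nat.mul_add]

lemma p_step {b : ℕ} (hb : 1 ≤ b) : pk 1 b = pk 1 (b - 1) + pk 2 b := by
  have := pk_rec (k := 1) (n := b) (by omega) hb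
  simpa using this

/-- strict inequality, non-exceptional pairs -/
lemma G : ∀ s a b : ℕ, a + b ≤ s → 2 ≤ a → a ≤ b →
    ¬(a = 2 ∧ b ≤ 7) → ¬(a = 3 ∧ b ≤ 5) → pk 1 (a + b) < pk 1 a * pk 1 b := by
  intro s
  induction s using Nat.strong_induction_on with
  | _ s ih =>
    intro a b hs ha hab hexc1 hexc2
    by_cases hb1 : a = 2 ∧ b = 8
    · obtain ⟨rfl, rfl⟩ := hb1
      rw [show (2:ℕ) + 8 = 10 by norm_num, pkv_1_10, pkv_1_2, pkv_1_8]
      norm_num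
    by_cases hb2 : a = 3 ∧ b = 6
    · obtain ⟨rfl, rfl⟩ := hb2
      rw [show (3:ℕ) + 6 = 9 by norm_num, pkv_1_9, pkv_1_3, pkv_1_6]
      norm_num
    by_cases hb3 : a = 4 ∧ b = 4
    · obtain ⟨rfl, rfl⟩ := hb3
      rw [show (4:ℕ) + 4 = 8 by norm_num, pkv_1_8, pkv_1_4]
      norm_num
    rcases eq_or_lt_of_le hab with rfl | hlt
    · -- diagonal, a = b ≥ 5
      have ha5 : 5 ≤ a := by omega
      have IH : pk 1 (a - 1 + a) < pk 1 (a - 1) * pk 1 a := by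
        apply ih (s - 1) (by omega) (a - 1) a (by omega) (by omega) (by omega)
        · rintro ⟨h2, h7⟩; omega
        · rintro ⟨h3, h5⟩; omega
      have hM : pk 2 (a + a) ≤ pk 1 a * pk 2 a := by
        apply M (2 * a) 2 a a (by omega) (by omega) (by omega) (by omega)
        rintro ⟨-, rfl, -⟩; omega
      have hrec : pk 1 (a + a) = pk 1 (a + a - 1) + pk 2 (a + a) := p_step (by omega)
      rw [show a + a - 1 = a - 1 + a by omega] at hrec
      have hrec2 : pk 1 a = pk 1 (a - 1) + pk 2 a := p_step (by omega)
      calc pk 1 (a + a) = pk 1 (a - 1 + a) + pk 2 (a + a) := hrec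
        _ < pk 1 (a - 1) * pk 1 a + pk 1 a * pk 2 a := by
            apply Nat.add_lt_add_of_lt_of_le IH hM
        _ = pk 1 a * pk 1 a := by rw [hrec2]; ring
    · -- off-diagonal step
      have IH : pk 1 (a + (b - 1)) < pk 1 a * pk 1 (b - 1) := by
        apply ih (s - 1) (by omega) a (b - 1) (by omega) ha (by omega)
        · rintro ⟨rfl, h7⟩
          apply hexc1
          constructor
          · rfl
          · by_contra hb8
            have : b = 8 := by omega
            exact hb1 ⟨rfl, this⟩
        · rintro ⟨rfl, h5⟩
          apply hexc2
          constructor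
          · rfl
          · by_contra hb6
            have : b = 6 := by omega
            exact hb2 ⟨rfl, this⟩
      have hM : pk 2 (a + b) ≤ pk 1 a * pk 2 b := by
        apply M (2 * b) 2 a b (by omega) (by omega) (by omega) (by omega)
        rintro ⟨-, rfl, hor⟩
        rcases hor with rfl | rfl
        · omega
        · exact hexc2 ⟨rfl, by omega⟩
      have hrec : pk 1 (a + b) = pk 1 (a + b - 1) + pk 2 (a + b) := p_step (by omega)
      rw [show a + b - 1 = a + (b - 1) by omega] at hrec
      have hrec2 : pk 1 b = pk 1 (b - 1) + pk 2 b := p_step (by omega)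
      calc pk 1 (a + b) = pk 1 (a + (b - 1)) + pk 2 (a + b) := hrec
        _ < pk 1 a * pk 1 (b - 1) + pk 1 a * pk 2 b := Nat.add_lt_add_of_lt_of_le IH hM
        _ = pk 1 a * pk 1 b := by rw [hrec2]; ring


lemma pv_2 : partitionFunction 2 = 2 := by rw [← pk_one]; exact pkv_1_2
lemma pv_3 : partitionFunction 3 = 3 := by rw [← pk_one]; exact pkv_1_3
lemma pv_4 : partitionFunction 4 = 5 := by rw [← pk_one]; exact pkv_1_4
lemma pv_5 : partitionFunction 5 = 7 := by rw [← pk_one]; exact pkv_1_5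
lemma pv_6 : partitionFunction 6 = 11 := by rw [← pk_one]; exact pkv_1_6
lemma pv_7 : partitionFunction 7 = 15 := by rw [← pk_one]; exact pkv_1_7
lemma pv_8 : partitionFunction 8 = 22 := by rw [← pk_one]; exact pkv_1_8
lemma pv_9 : partitionFunction 9 = 30 := by rw [← pk_one]; exact pkv_1_9
lemma pv_10 : partitionFunction 10 = 42 := by rw [← pk_one]; exact pkv_1_10

lemma table_eq {a b : ℕ} (h : (a = 2 ∧ b = 6) ∨ (a = 2 ∧ b = 7) ∨ (a = 3 ∧ b = 4)) :
    partitionFunction a * partitionFunction b = partitionFunction (a + b) := by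
  rcases h with ⟨rfl, rfl⟩ | ⟨rfl, rfl⟩ | ⟨rfl, rfl⟩
  · rw [show (2:ℕ) + 6 = 8 by norm_num, pv_2, pv_6, pv_8]
  · rw [show (2:ℕ) + 7 = 9 by norm_num, pv_2, pv_7, pv_9]
  · rw [show (3:ℕ) + 4 = 7 by norm_num, pv_3, pv_4, pv_7]

lemma table_lt {a b : ℕ} (h : (a = 2 ∧ b = 2) ∨ (a = 2 ∧ b = 3) ∨ (a = 2 ∧ b = 4) ∨
    (a = 2 ∧ b = 5) ∨ (a = 3 ∧ b = 3) ∨ (a = 3 ∧ b = 5)) :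
    partitionFunction a * partitionFunction b < partitionFunction (a + b) := by
  rcases h with ⟨rfl, rfl⟩ | ⟨rfl, rfl⟩ | ⟨rfl, rfl⟩ | ⟨rfl, rfl⟩ | ⟨rfl, rfl⟩ | ⟨rfl, rfl⟩
  · rw [show (2:ℕ) + 2 = 4 by norm_num, pv_2, pv_4]; norm_num
  · rw [show (2:ℕ) + 3 = 5 by norm_num, pv_2, pv_3, pv_5]; norm_num
  · rw [show (2:ℕ) + 4 = 6 by norm_num, pv_2, pv_4, pv_6]; norm_num
  · rw [show (2:ℕ) + 5 = 7 by norm_num, pv_2, pv_5, pv_7]; norm_num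
  · rw [show (3:ℕ) + 3 = 6 by norm_num, pv_3, pv_6]; norm_num
  · rw [show (3:ℕ) + 5 = 8 by norm_num, pv_3, pv_5, pv_8]; norm_num

lemma table_gt {a b : ℕ} (ha : 2 ≤ a) (hab : a ≤ b)
    (h : ¬((a = 2 ∧ b = 6) ∨ (a = 2 ∧ b = 7) ∨ (a = 3 ∧ b = 4) ∨ (a = 2 ∧ b = 2) ∨
      (a = 2 ∧ b = 3) ∨ (a = 2 ∧ b = 4) ∨ (a = 2 ∧ b = 5) ∨ (a = 3 ∧ b = 3) ∨
      (a = 3 ∧ b = 5))) :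
    partitionFunction (a + b) < partitionFunction a * partitionFunction b := by
  have h1 : ¬(a = 2 ∧ b ≤ 7) := by omega
  have h2 : ¬(a = 3 ∧ b ≤ 5) := by omega
  have := G (a + b) a b le_rfl ha hab h1 h2
  rwa [pk_one, pk_one, pk_one] at this

/-- The Bessenrodt–Ono theorem: for `1 < a ≤ b`, `p(a) p(b) = p(a+b)` exactly for
`(a,b) ∈ {(2,6), (2,7), (3,4)}`, `p(a) p(b) < p(a+b)` exactly for
`(a,b) ∈ {(2,2), (2,3), (2,4), (2,5), (3,3), (3,5)}`, and `p(a) p(b) > p(a+b)` otherwise. -/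
theorem bessenrodt_ono (a b : ℕ) (ha : 1 < a) (hab : a ≤ b) :
    (partitionFunction a * partitionFunction b = partitionFunction (a + b) ↔
      (a, b) ∈ ({(2, 6), (2, 7), (3, 4)} : Set (ℕ × ℕ))) ∧
    (partitionFunction a * partitionFunction b < partitionFunction (a + b) ↔
      (a, b) ∈ ({(2, 2), (2, 3), (2, 4), (2, 5), (3, 3), (3, 5)} : Set (ℕ × ℕ))) ∧
    ((a, b) ∉ ({(2, 6), (2, 7), (3, 4), (2, 2), (2, 3), (2, 4), (2, 5), (3, 3),
        (3, 5)} : Set (ℕ × ℕ)) →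
      partitionFunction a * partitionFunction b > partitionFunction (a + b)) := by
  simp only [Set.mem_insert_iff, Set.mem_singleton_iff, Prod.mk.injEq]
  refine ⟨⟨?_, ?_⟩, ⟨?_, ?_⟩, ?_⟩
  · intro heq
    by_contra h3
    push_neg at h3
    by_cases h6 : (a = 2 ∧ b = 2) ∨ (a = 2 ∧ b = 3) ∨ (a = 2 ∧ b = 4) ∨
        (a = 2 ∧ b = 5) ∨ (a = 3 ∧ b = 3) ∨ (a = 3 ∧ b = 5)
    · have := table_lt h6
      omega
    · have := table_gt (by omega) hab (by omega)
      omega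
  · intro h
    apply table_eq
    tauto
  · intro hlt
    by_contra h6
    push_neg at h6
    by_cases h3 : (a = 2 ∧ b = 6) ∨ (a = 2 ∧ b = 7) ∨ (a = 3 ∧ b = 4)
    · have := table_eq h3
      omega
    · have := table_gt (by omega) hab (by omega)
      omega
  · intro h
    apply table_lt
    tauto
  · intro h9
    push_neg at h9
    have := table_gt (by omega) hab (by omega)
    omega
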